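/- Let m ≥ 2, let Γ be a subgroup of Perm(Fin m), and let O_1, …, O_t be the orbits of the natural action of the commutator subgroup ⁅Γ,Γ⁆ on Fin m. Let a : Fin m → ℕ and for each orbit O set n_O = min { a(j) : j ∈ O }. Suppose N ∈ ℕ satisfies: for every function f assigning to each unordered pair of distinct elements of Fin N one of the orbits, there is an orbit O and an n_O-element set of vertices all of whose pairs are mapped by f to O. Then every m-edge-colouring of the complete graph on N vertices is Γ-switch equivalent to a colouring containing, for some i ∈ Fin m, a monochromatic K_{a(i)} of colour i. -/

import Mathlib

open scoped Classical in
/-- Switch the edge-colouring `c` at vertex `v` with permutation `π`: every edge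
incident with `v` has its colour replaced by its image under `π`. -/
noncomputable def switchAt {V K : Type*} (c : Sym2 V → K) (π : Equiv.Perm K) (v : V) :
    Sym2 V → K :=
  fun s => if v ∈ s then π (c s) else c s

/-- Two colourings are `Γ`-switch equivalent if one is obtained from the other by a
finite sequence of switches at vertices with permutations from `Γ`. -/
def SwitchEquiv {V K : Type*} (Γ : Subgroup (Equiv.Perm K)) (c c' : Sym2 V → K) : Prop :=
  Relation.ReflTransGen (fun d d' => ∃ π ∈ Γ, ∃ v : V, d' = switchAt d π v) c c'

/-- The colouring `c` contains a monochromatic complete graph on `t` vertices of colour `i`. -/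
def HasMonoK {V K : Type*} (c : Sym2 V → K) (i : K) (t : ℕ) : Prop :=
  ∃ S : Finset V, S.card = t ∧ ∀ x ∈ S, ∀ y ∈ S, x ≠ y → c s(x, y) = i

open scoped Classical in
noncomputable def updE {V K : Type*} (c : Sym2 V → K) (e : Sym2 V) (σ : Equiv.Perm K) :
    Sym2 V → K := fun s => if s = e then σ (c s) else c s

open scoped Classical

lemma switchEquiv_symm {V K : Type*} (Γ : Subgroup (Equiv.Perm K)) {c c' : Sym2 V → K}
    (h : SwitchEquiv Γ c c') : SwitchEquiv Γ c' c := by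
  refine @Std.Symm.symm _ _ (@Relation.ReflTransGen.stdSymm _ _ ⟨?_⟩) _ _ h
  rintro d d' ⟨π, hπ, v, rfl⟩
  refine ⟨π⁻¹, inv_mem hπ, v, ?_⟩
  funext s
  simp only [switchAt]
  split_ifs with hs <;> simp

lemma switchEquiv_step {V K : Type*} (Γ : Subgroup (Equiv.Perm K)) {π : Equiv.Perm K}
    (hπ : π ∈ Γ) (v : V) (c : Sym2 V → K) : SwitchEquiv Γ c (switchAt c π v) :=
  Relation.ReflTransGen.single ⟨π, hπ, v, rfl⟩

open scoped commutatorElement in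
lemma key {V K : Type*} (Γ : Subgroup (Equiv.Perm K)) {u v : V} (huv : u ≠ v)
    {g h : Equiv.Perm K} (hg : g ∈ Γ) (hh : h ∈ Γ) (c : Sym2 V → K) :
    SwitchEquiv Γ c (updE c s(u, v) ⁅g, h⁆) := by
  have e4 : updE c s(u, v) ⁅g, h⁆
      = switchAt (switchAt (switchAt (switchAt c h⁻¹ u) g⁻¹ v) h u) g v := by
    funext s
    simp only [updE, switchAt]
    by_cases hu : u ∈ s <;> by_cases hv : v ∈ s
    · have hs : s = s(u, v) := ((Sym2.mem_and_mem_iff huv).mp ⟨hu, hv⟩)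
      simp [hu, hv, hs, commutatorElement_def, Equiv.Perm.mul_apply]
    · have hs : s ≠ s(u, v) := fun hs => hv (hs ▸ Sym2.mem_mk_right u v)
      simp [hu, hv, hs]
    · have hs : s ≠ s(u, v) := fun hs => hu (hs ▸ Sym2.mem_mk_left u v)
      simp [hu, hv, hs]
    · have hs : s ≠ s(u, v) := fun hs => hu (hs ▸ Sym2.mem_mk_left u v)
      simp [hu, hv, hs]
  rw [e4]
  exact (((switchEquiv_step Γ (inv_mem hh) u c).tail ⟨g⁻¹, inv_mem hg, v, rfl⟩).tail
    ⟨h, hh, u, rfl⟩).tail ⟨g, hg, v, rfl⟩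

lemma updE_equiv {V K : Type*} (Γ : Subgroup (Equiv.Perm K)) {e : Sym2 V} (he : ¬ e.IsDiag)
    {σ : Equiv.Perm K} (hσ : σ ∈ ⁅Γ, Γ⁆) (c : Sym2 V → K) :
    SwitchEquiv Γ c (updE c e σ) := by
  induction e using Sym2.ind with
  | _ u v =>
  have huv : u ≠ v := by simpa [Sym2.mk_isDiag_iff] using he
  rw [Subgroup.commutator_def] at hσ
  induction hσ using Subgroup.closure_induction generalizing c with
  | mem x hx =>
    obtain ⟨g, hg, h, hh, rfl⟩ := hx
    exact key Γ huv hg hh c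
  | one =>
    have : updE c s(u, v) 1 = c := by funext s; simp [updE]
    rw [this]; exact Relation.ReflTransGen.refl
  | mul σ τ _ _ ihσ ihτ =>
    have : updE c s(u, v) (σ * τ) = updE (updE c s(u, v) τ) s(u, v) σ := by
      funext s; by_cases hs : s = s(u, v) <;> simp [updE, hs]
    rw [this]
    exact (ihτ c).trans (ihσ _)
  | inv σ _ ih =>
    have : updE (updE c s(u, v) σ⁻¹) s(u, v) σ = c := by
      funext s; by_cases hs : s = s(u, v) <;> simp [updE, hs]
    have h2 := ih (updE c s(u, v) σ⁻¹)
    rw [this] at h2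
    exact switchEquiv_symm Γ h2

lemma iter_updE {V K : Type*} [DecidableEq V] (Γ : Subgroup (Equiv.Perm K)) (j : K)
    (c : Sym2 V → K) (T : Finset (Sym2 V))
    (hT : ∀ e ∈ T, ¬ e.IsDiag ∧ ∃ σ : Equiv.Perm K, σ ∈ ⁅Γ, Γ⁆ ∧ σ (c e) = j) :
    ∃ c', SwitchEquiv Γ c c' ∧ (∀ e ∈ T, c' e = j) ∧ ∀ e ∉ T, c' e = c e := by
  classical
  induction T using Finset.induction_on with
  | empty => exact ⟨c, Relation.ReflTransGen.refl, by simp, fun _ _ => rfl⟩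
  | @insert e T henew ih =>
    obtain ⟨c', hcc', hon, hoff⟩ := ih fun e' he' => hT e' (Finset.mem_insert_of_mem he')
    obtain ⟨hd, σ, hσ, hσj⟩ := hT e (Finset.mem_insert_self e T)
    refine ⟨updE c' e σ, hcc'.trans (updE_equiv Γ hd hσ c'), ?_, ?_⟩
    · intro e' he'
      rcases Finset.mem_insert.mp he' with rfl | he'
      · simp [updE, hoff _ henew, hσj]
      · have hne : e' ≠ e := fun h => henew (h ▸ he')
        simpa [updE, hne] using hon e' he'
    · intro e' he'
      have h1 : e' ≠ e := fun h => he' (h ▸ Finset.mem_insert_self e T)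
      have h2 : e' ∉ T := fun h => he' (Finset.mem_insert_of_mem h)
      simpa [updE, h1] using hoff e' h2

/-- If `N` has the Ramsey property for labellings of edges by orbits of the action of
`⁅Γ,Γ⁆` on the colours (with target `n_O = min {a j : j ∈ O}` for each orbit `O`), then
every `m`-edge-colouring of `K_N` is `Γ`-switch equivalent to one containing a
monochromatic `K_{a i}` of colour `i` for some `i`. -/
theorem stmt4 (m : ℕ) (hm : 2 ≤ m) (Γ : Subgroup (Equiv.Perm (Fin m)))
    (a : Fin m → ℕ) (N : ℕ)
    (hN : ∀ f : Sym2 (Fin N) → Set (Fin m),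
      (∀ x y : Fin N, x ≠ y → ∃ i : Fin m, f s(x, y) = MulAction.orbit (↥⁅Γ, Γ⁆) i) →
      ∃ i : Fin m, ∃ S : Finset (Fin N),
        S.card = sInf (a '' MulAction.orbit (↥⁅Γ, Γ⁆) i) ∧
        ∀ x ∈ S, ∀ y ∈ S, x ≠ y → f s(x, y) = MulAction.orbit (↥⁅Γ, Γ⁆) i)
    (c : Sym2 (Fin N) → Fin m) :
    ∃ c', SwitchEquiv Γ c c' ∧ ∃ i : Fin m, HasMonoK c' i (a i) := by
  classical
  obtain ⟨i, S, hcard, hS⟩ := hN (fun s => MulAction.orbit (↥⁅Γ, Γ⁆) (c s))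
    (fun x y _ => ⟨c s(x, y), rfl⟩)
  have hne : (a '' MulAction.orbit (↥⁅Γ, Γ⁆) i).Nonempty :=
    ⟨a i, i, MulAction.mem_orbit_self i, rfl⟩
  obtain ⟨j, hjorb, hja⟩ := Nat.sInf_mem hne
  have horb : MulAction.orbit (↥⁅Γ, Γ⁆) j = MulAction.orbit (↥⁅Γ, Γ⁆) i :=
    MulAction.orbit_eq_iff.mpr hjorb
  set T : Finset (Sym2 (Fin N)) := S.offDiag.image (fun p => s(p.1, p.2)) with hT
  have hTcond : ∀ e ∈ T, ¬ e.IsDiag ∧ ∃ σ : Equiv.Perm (Fin m), σ ∈ ⁅Γ, Γ⁆ ∧ σ (c e) = j := by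
    intro e he
    obtain ⟨⟨x, y⟩, hp, rfl⟩ := Finset.mem_image.mp he
    obtain ⟨hx, hy, hxy⟩ := Finset.mem_offDiag.mp hp
    refine ⟨by simp [Sym2.mk_isDiag_iff, hxy], ?_⟩
    have hmem : c s(x, y) ∈ MulAction.orbit (↥⁅Γ, Γ⁆) j := by
      rw [horb, ← hS x hx y hy hxy]
      exact MulAction.mem_orbit_self _
    obtain ⟨σ, hσ⟩ := MulAction.mem_orbit_iff.mp hmem
    refine ⟨(σ : Equiv.Perm (Fin m))⁻¹, inv_mem σ.2, ?_⟩
    have : (σ : Equiv.Perm (Fin m)) j = c s(x, y) := hσ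
    rw [← this]; simp
  obtain ⟨c', hcc', hon, _⟩ := iter_updE Γ j c T hTcond
  refine ⟨c', hcc', j, S, by rw [hcard, hja], fun x hx y hy hxy => ?_⟩
  exact hon s(x, y) (Finset.mem_image.mpr ⟨(x, y), Finset.mem_offDiag.mpr ⟨hx, hy, hxy⟩, rfl⟩)
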